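/- For every s with −3/2 < s < 1/2, one has ∫_{1/4}^∞ (x − 1/4)^s · √(4x − 1)/(2πx²) dx = (2^{1−2s}/π)·Γ(3/2 + s)·Γ(1/2 − s). In particular the function x ↦ √(4x−1)/(2πx²) on [1/4,∞) is a probability density (case s = 0). -/

import Mathlib

open MeasureTheory Set Filter Real

lemma image_fmap : (fun y : ℝ => (4 * (1 - y))⁻¹) '' Set.Ioo 0 1 = Set.Ioi (1/4 : ℝ) := by
  ext z
  simp only [Set.mem_image, Set.mem_Ioo, Set.mem_Ioi]
  constructor
  · rintro ⟨y, ⟨hy0, hy1⟩, rfl⟩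
    rw [lt_inv_comm₀ (by norm_num) (by nlinarith)]
    nlinarith
  · intro hz
    refine ⟨1 - (4 * z)⁻¹, ⟨?_, ?_⟩, ?_⟩
    · have : (4 * z)⁻¹ < 1 := by
        rw [inv_lt_one_iff₀]; right; linarith
      linarith
    · have : 0 < (4 * z)⁻¹ := by positivity
      linarith
    · have hz0 : (4:ℝ) * z ≠ 0 := by positivity
      field_simp
      ring

lemma mellin_cov (s : ℝ) :
    ∫ x in Set.Ioi (1/4 : ℝ), (x - 1/4) ^ s * (Real.sqrt (4 * x - 1) / (2 * π * x ^ 2))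
      = ∫ y in Set.Ioo (0:ℝ) 1,
          (2 * (4:ℝ) ^ (-s) / π) * (y ^ (s + 3/2 - 1) * (1-y) ^ (1/2 - s - 1)) := by
  rw [← image_fmap]
  rw [integral_image_eq_integral_abs_deriv_smul measurableSet_Ioo
    (f' := fun y => (4 * (1 - y)^2)⁻¹) ?hderiv ?hinj]
  · refine setIntegral_congr_fun measurableSet_Ioo fun y hy => ?_
    obtain ⟨hy0, hy1⟩ := hy
    have h1y : (0:ℝ) < 1 - y := by linarith
    have e1 : (4 * (1 - y))⁻¹ - 1/4 = y / (4 * (1 - y)) := by field_simp; ring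
    have e2 : 4 * (4 * (1 - y))⁻¹ - 1 = y / (1 - y) := by field_simp; ring
    rw [smul_eq_mul, e1, e2,
      Real.div_rpow hy0.le (by positivity),
      Real.sqrt_eq_rpow, Real.div_rpow hy0.le h1y.le,
      Real.mul_rpow (by norm_num) h1y.le,
      abs_of_pos (by positivity),
      show s + 3/2 - 1 = s + 1/2 by ring,
      Real.rpow_add hy0, Real.rpow_neg (by norm_num : (0:ℝ) ≤ 4),
      show (1/2 : ℝ) - s - 1 = -s + -(1/2) by ring,
      Real.rpow_add h1y, Real.rpow_neg h1y.le, Real.rpow_neg h1y.le]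
    have hy2 : y ^ ((1:ℝ)/2) = y ^ (1/(2:ℝ)) := by norm_num
    have hys : (1-y) ^ ((1:ℝ)/2) ≠ 0 := by positivity
    have h4s : (4:ℝ) ^ s ≠ 0 := by positivity
    have hpi : π ≠ 0 := Real.pi_ne_zero
    rw [hy2]
    field_simp
    ring
  case hderiv =>
    intro y hy
    obtain ⟨hy0, hy1⟩ := hy
    have hne : 4 * (1 - y) ≠ 0 := by nlinarith
    have h : HasDerivAt (fun y : ℝ => (4 * (1 - y))⁻¹)
        (-(-4) / (4 * (1 - y))^2) y := by
      have h1 : HasDerivAt (fun y : ℝ => 4 * (1 - y)) (-4) y := by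
        simpa using ((hasDerivAt_id y).const_sub 1).const_mul 4
      exact h1.inv hne
    have h1y : (1:ℝ) - y ≠ 0 := by nlinarith
    have heq : -(-4) / (4 * (1 - y))^2 = (4 * (1 - y)^2)⁻¹ := by
      rw [neg_neg, mul_pow]
      field_simp
    rw [heq] at h
    exact h.hasDerivWithinAt
  case hinj =>
    intro x hx y hy h
    simp only [Set.mem_Ioo] at hx hy
    have hx' : (4:ℝ) * (1 - x) ≠ 0 := by nlinarith
    have hy' : (4:ℝ) * (1 - y) ≠ 0 := by nlinarith
    field_simp at h
    rw [div_eq_div_iff (by linarith [hx.2]) (by linarith [hy.2])] at h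
    linarith

lemma real_beta_Ioo {a b : ℝ} (ha : 0 < a) (hb : 0 < b) :
    ∫ y in Set.Ioo (0:ℝ) 1, y ^ (a-1) * (1-y) ^ (b-1)
      = Real.Gamma a * Real.Gamma b / Real.Gamma (a+b) := by
  have h := Complex.Gamma_mul_Gamma_eq_betaIntegral (s := (a:ℂ)) (t := (b:ℂ))
    (by simpa using ha) (by simpa using hb)
  rw [Complex.betaIntegral] at h
  have hcongr : ∀ x ∈ Set.uIcc (0:ℝ) 1,
      (x:ℂ) ^ ((a:ℂ) - 1) * (1 - (x:ℂ)) ^ ((b:ℂ) - 1)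
        = ((x ^ (a-1) * (1-x) ^ (b-1) : ℝ) : ℂ) := by
    intro x hx
    rw [Set.uIcc_of_le zero_le_one] at hx
    rw [show ((a:ℂ) - 1) = ((a - 1 : ℝ) : ℂ) by push_cast; ring,
        show ((b:ℂ) - 1) = ((b - 1 : ℝ) : ℂ) by push_cast; ring,
        show (1 - (x:ℂ)) = ((1 - x : ℝ) : ℂ) by push_cast; ring,
        ← Complex.ofReal_cpow hx.1, ← Complex.ofReal_cpow (by linarith [hx.2])]
    push_cast
    ring
  rw [intervalIntegral.integral_congr hcongr, intervalIntegral.integral_ofReal,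
    ← Complex.ofReal_add, Complex.Gamma_ofReal, Complex.Gamma_ofReal, Complex.Gamma_ofReal,
    ← Complex.ofReal_mul, ← Complex.ofReal_mul] at h
  have h' := Complex.ofReal_injective h
  have hI : ∫ y in Set.Ioo (0:ℝ) 1, y ^ (a-1) * (1-y) ^ (b-1)
      = ∫ x in (0:ℝ)..1, x ^ (a-1) * (1-x) ^ (b-1) := by
    rw [intervalIntegral.integral_of_le zero_le_one, MeasureTheory.integral_Ioc_eq_integral_Ioo]
  have hG : Real.Gamma (a+b) ≠ 0 := (Real.Gamma_pos_of_pos (by linarith)).ne'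
  rw [hI]
  field_simp
  linarith [h']

/-- Mellin transform of the shifted free positive `1/2`-stable law:
for `−3/2 < s < 1/2`,
`∫_{1/4}^∞ (x−1/4)^s √(4x−1)/(2πx²) dx = (2^{1−2s}/π) Γ(3/2+s) Γ(1/2−s)`;
in particular `x ↦ √(4x−1)/(2πx²)` is a probability density on `[1/4,∞)`. -/
theorem free_half_stable_shifted_mellin :
    (∀ s : ℝ, -(3/2) < s → s < 1/2 →
      ∫ x in Set.Ioi (1/4 : ℝ),
          (x - 1/4) ^ s * (Real.sqrt (4 * x - 1) / (2 * π * x ^ 2))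
        = (2:ℝ) ^ (1 - 2 * s) / π * Real.Gamma (3/2 + s) * Real.Gamma (1/2 - s)) ∧
    ∫ x in Set.Ioi (1/4 : ℝ), Real.sqrt (4 * x - 1) / (2 * π * x ^ 2) = 1 := by

  have main : ∀ s : ℝ, -(3/2) < s → s < 1/2 →
      ∫ x in Set.Ioi (1/4 : ℝ),
          (x - 1/4) ^ s * (Real.sqrt (4 * x - 1) / (2 * π * x ^ 2))
        = (2:ℝ) ^ (1 - 2 * s) / π * Real.Gamma (3/2 + s) * Real.Gamma (1/2 - s) := by
    intro s hs1 hs2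
    rw [mellin_cov s, MeasureTheory.integral_const_mul,
      real_beta_Ioo (by linarith) (by linarith),
      show s + 3/2 + (1/2 - s) = 2 by ring, Real.Gamma_two]
    have h4 : (4:ℝ) ^ (-s) = (2:ℝ) ^ (-(2*s)) := by
      rw [show (4:ℝ) = (2:ℝ) ^ (2:ℝ) by
            rw [show (2:ℝ) = ((2:ℕ):ℝ) by norm_num, Real.rpow_natCast]; norm_num,
          ← Real.rpow_mul (by norm_num)]
      ring_nf
    rw [h4, show (1:ℝ) - 2*s = 1 + -(2*s) by ring,
      Real.rpow_add (by norm_num : (0:ℝ) < 2), Real.rpow_one,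
      show (3:ℝ)/2 + s = s + 3/2 by ring]
    ring
  refine ⟨main, ?_⟩
  have h0 := main 0 (by norm_num) (by norm_num)
  simp only [Real.rpow_zero, one_mul, mul_zero, sub_zero, add_zero] at h0
  rw [h0, Real.rpow_one, show (3:ℝ)/2 = 1/2 + 1 by norm_num,
    Real.Gamma_add_one (by norm_num), Real.Gamma_one_half_eq]
  rw [div_mul_eq_mul_div, div_mul_eq_mul_div]
  rw [show 2 * (1/2 * Real.sqrt π) * Real.sqrt π = Real.sqrt π * Real.sqrt π by ring,
    Real.mul_self_sqrt Real.pi_pos.le]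
  exact div_self Real.pi_ne_zero
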